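/- Let n = 2sk and let G₁ = diag(G_{1,1}, ..., G_{1,s}) and G₂ = diag(I_k, G_{2,2}, ..., G_{2,s}, G_{2,s+1}) be block diagonal unitary n×n matrices, where G_{2,s+1} is a k×k unitary matrix and all other diagonal blocks G_{i,j} are 2k×2k unitary matrices of bandwidth k such that, for each such block, G_{i,j}(k+1:2k, 1:k) is a nonsingular upper triangular matrix and G_{i,j}(1:k, k+1:2k) is a nonsingular lower triangular matrix. Then the product G = G₁G₂ is a unitary matrix that is CMV structured with block size k. -/
import Mathlib


open Matrix

lemma blk_lt {m k : ℕ} (i : Fin m) (a : Fin k) : i.1 * k + a.1 < m * k := by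
  have h1 : i.1 * k + a.1 < (i.1 + 1) * k := by
    have := a.2
    rw [Nat.add_mul]
    omega
  have h2 : (i.1 + 1) * k ≤ m * k := Nat.mul_le_mul_right _ i.2
  omega

/-- The `(i,j)`-th (0-based) `k × k` block of an `(m·k) × (m·k)` matrix. -/
def blk {m k : ℕ} (G : Matrix (Fin (m * k)) (Fin (m * k)) ℂ) (i j : Fin m) :
    Matrix (Fin k) (Fin k) ℂ :=
  Matrix.of fun a b => G ⟨i.1 * k + a.1, blk_lt i a⟩ ⟨j.1 * k + b.1, blk_lt j b⟩

/-- A square matrix is lower triangular: the entries above the diagonal vanish. -/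
def LowerTriangular {k : ℕ} (M : Matrix (Fin k) (Fin k) ℂ) : Prop :=
  ∀ a b : Fin k, a < b → M a b = 0

/-- A square matrix is upper triangular: the entries below the diagonal vanish. -/
def UpperTriangular {k : ℕ} (M : Matrix (Fin k) (Fin k) ℂ) : Prop :=
  ∀ a b : Fin k, b < a → M a b = 0

/-- `G ∈ ℂ^{n×n}` (with `n = 2sk`), partitioned into `k × k` blocks `G_{ij}`
(`1 ≤ i,j ≤ 2s`), is *CMV structured with block size `k`* if `G_{ij} = 0`
whenever `j < 2⌈i/2⌉ − 2` or `j > 2⌈i/2⌉ + 1`, the blocks `G_{2p−1,2p+1}`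
(`1 ≤ p ≤ s−1`) are nonsingular lower triangular, and the blocks `G_{2,1}` and
`G_{2p,2p−2}` (`2 ≤ p ≤ s`) are nonsingular upper triangular.
(Below, block indices are 0-based: block `(i₀,j₀)` corresponds to `(i₀+1, j₀+1)`,
and `⌈(i₀+1)/2⌉ = (i₀+2)/2` with natural division.) -/
def IsCMV (s k : ℕ) (G : Matrix (Fin (2 * s * k)) (Fin (2 * s * k)) ℂ) : Prop :=
  (∀ i j : Fin (2 * s),
      (j.1 + 3 < 2 * ((i.1 + 2) / 2) ∨ 2 * ((i.1 + 2) / 2) < j.1) → blk G i j = 0) ∧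
  (∀ p : ℕ, ∀ _ : 1 ≤ p, ∀ _ : p ≤ s - 1,
      LowerTriangular (blk G ⟨2 * p - 2, by omega⟩ ⟨2 * p, by omega⟩) ∧
      (blk G ⟨2 * p - 2, by omega⟩ ⟨2 * p, by omega⟩).det ≠ 0) ∧
  (∀ _ : 1 ≤ s,
      UpperTriangular (blk G ⟨1, by omega⟩ ⟨0, by omega⟩) ∧
      (blk G ⟨1, by omega⟩ ⟨0, by omega⟩).det ≠ 0) ∧
  (∀ p : ℕ, ∀ _ : 2 ≤ p, ∀ _ : p ≤ s,
      UpperTriangular (blk G ⟨2 * p - 1, by omega⟩ ⟨2 * p - 3, by omega⟩) ∧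
      (blk G ⟨2 * p - 1, by omega⟩ ⟨2 * p - 3, by omega⟩).det ≠ 0)

/-- The square `k × k` submatrix of `M` with top-left corner at (0-based) `(r, c)`. -/
def subsq {n : ℕ} (M : Matrix (Fin n) (Fin n) ℂ) (k r c : ℕ)
    (hr : r + k ≤ n) (hc : c + k ≤ n) : Matrix (Fin k) (Fin k) ℂ :=
  Matrix.of fun a b => M ⟨r + a.1, by omega⟩ ⟨c + b.1, by omega⟩

lemma bnd_one {m k a : ℕ} (h : a + 1 ≤ m) : a * k + k ≤ m * k := by
  calc a * k + k = (a + 1) * k := by ring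
    _ ≤ m * k := Nat.mul_le_mul_right _ h

lemma bnd_two {m k a : ℕ} (h : a + 2 ≤ m) : a * k + 2 * k ≤ m * k := by
  calc a * k + 2 * k = (a + 2) * k := by ring
    _ ≤ m * k := Nat.mul_le_mul_right _ h

/-- A square matrix has bandwidth `k`: entries with `|row − column| > k` vanish. -/
def Band (k : ℕ) {m : ℕ} (M : Matrix (Fin m) (Fin m) ℂ) : Prop :=
  ∀ a b : Fin m, (b.1 + k < a.1 ∨ a.1 + k < b.1) → M a b = 0

/-- Index (0-based) of the diagonal block of `diag(I_k, G_{2,2}, …, G_{2,s}, G_{2,s+1})`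
containing row/column `x`: block `0` is the leading `k × k` identity, blocks
`1, …, s−1` have size `2k`, block `s` is the trailing `k × k` block. -/
def blkIdx2 (k x : ℕ) : ℕ := if x < k then 0 else (x - k) / (2 * k) + 1

/-- The pair `(G₁, G₂)` is a *CMV factorization* (as in the CMV factorization lemma):
`G₁ = diag(G_{1,1}, …, G_{1,s})` and `G₂ = diag(I_k, G_{2,2}, …, G_{2,s}, G_{2,s+1})`
are block diagonal unitary matrices, `G_{2,s+1}` is a `k × k` unitary matrix, and all
other diagonal blocks are `2k × 2k` unitary matrices of bandwidth `k` whose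
`(k+1:2k, 1:k)` submatrix is nonsingular upper triangular and whose `(1:k, k+1:2k)`
submatrix is nonsingular lower triangular. -/
def IsCMVFactor (s k : ℕ) (G₁ G₂ : Matrix (Fin (2 * s * k)) (Fin (2 * s * k)) ℂ) : Prop :=
  G₁ ∈ Matrix.unitaryGroup (Fin (2 * s * k)) ℂ ∧
  G₂ ∈ Matrix.unitaryGroup (Fin (2 * s * k)) ℂ ∧
  -- `G₁` is block diagonal with `s` diagonal blocks of size `2k`
  (∀ x y : Fin (2 * s * k), x.1 / (2 * k) ≠ y.1 / (2 * k) → G₁ x y = 0) ∧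
  -- each diagonal block of `G₁` is unitary of bandwidth `k` with the corner conditions
  (∀ i : Fin s,
    subsq G₁ (2 * k) (2 * i.1 * k) (2 * i.1 * k) (bnd_two (by omega)) (bnd_two (by omega))
        ∈ Matrix.unitaryGroup (Fin (2 * k)) ℂ ∧
    Band k (subsq G₁ (2 * k) (2 * i.1 * k) (2 * i.1 * k)
        (bnd_two (by omega)) (bnd_two (by omega))) ∧
    UpperTriangular (subsq G₁ k ((2 * i.1 + 1) * k) (2 * i.1 * k)
        (bnd_one (by omega)) (bnd_one (by omega))) ∧
    (subsq G₁ k ((2 * i.1 + 1) * k) (2 * i.1 * k)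
        (bnd_one (by omega)) (bnd_one (by omega))).det ≠ 0 ∧
    LowerTriangular (subsq G₁ k (2 * i.1 * k) ((2 * i.1 + 1) * k)
        (bnd_one (by omega)) (bnd_one (by omega))) ∧
    (subsq G₁ k (2 * i.1 * k) ((2 * i.1 + 1) * k)
        (bnd_one (by omega)) (bnd_one (by omega))).det ≠ 0) ∧
  -- `G₂` is block diagonal with blocks of sizes `k, 2k, …, 2k, k`
  (∀ x y : Fin (2 * s * k), blkIdx2 k x.1 ≠ blkIdx2 k y.1 → G₂ x y = 0) ∧
  -- the leading block of `G₂` is `I_k`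
  (∀ x y : Fin (2 * s * k), x.1 < k → y.1 < k → G₂ x y = if x.1 = y.1 then 1 else 0) ∧
  -- the middle diagonal blocks of `G₂` are unitary of bandwidth `k` with corner conditions
  (∀ j : Fin (s - 1),
    subsq G₂ (2 * k) ((2 * j.1 + 1) * k) ((2 * j.1 + 1) * k)
        (bnd_two (by omega)) (bnd_two (by omega)) ∈ Matrix.unitaryGroup (Fin (2 * k)) ℂ ∧
    Band k (subsq G₂ (2 * k) ((2 * j.1 + 1) * k) ((2 * j.1 + 1) * k)
        (bnd_two (by omega)) (bnd_two (by omega))) ∧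
    UpperTriangular (subsq G₂ k ((2 * j.1 + 2) * k) ((2 * j.1 + 1) * k)
        (bnd_one (by omega)) (bnd_one (by omega))) ∧
    (subsq G₂ k ((2 * j.1 + 2) * k) ((2 * j.1 + 1) * k)
        (bnd_one (by omega)) (bnd_one (by omega))).det ≠ 0 ∧
    LowerTriangular (subsq G₂ k ((2 * j.1 + 1) * k) ((2 * j.1 + 2) * k)
        (bnd_one (by omega)) (bnd_one (by omega))) ∧
    (subsq G₂ k ((2 * j.1 + 1) * k) ((2 * j.1 + 2) * k)
        (bnd_one (by omega)) (bnd_one (by omega))).det ≠ 0) ∧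
  -- the trailing `k × k` block `G_{2,s+1}` of `G₂` is unitary
  (∀ _ : 1 ≤ s,
    subsq G₂ k ((2 * s - 1) * k) ((2 * s - 1) * k)
        (bnd_one (by omega)) (bnd_one (by omega)) ∈ Matrix.unitaryGroup (Fin k) ℂ)

section CMVAux

lemma div2k' {k u c : ℕ} (hk : 0 < k) (hc : c < k) : (u * k + c) / (2 * k) = u / 2 := by
  have hu := Nat.div_add_mod u 2
  have hr : u % 2 ≤ 1 := by omega
  have hx : u * k + c = u / 2 * (2 * k) + (u % 2 * k + c) := by
    conv_lhs => rw [← hu]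
    ring
  apply Nat.div_eq_of_lt_le
  · rw [hx]
    exact Nat.le_add_right _ _
  · rw [hx, show (u / 2 + 1) * (2 * k) = u / 2 * (2 * k) + 2 * k from by ring]
    have h2 : u % 2 * k ≤ 1 * k := Nat.mul_le_mul_right k hr
    omega

lemma blkIdx2_eq' {k w c : ℕ} (hk : 0 < k) (hc : c < k) :
    blkIdx2 k (w * k + c) = (w + 1) / 2 := by
  unfold blkIdx2
  rcases Nat.eq_zero_or_pos w with h | h
  · subst h
    rw [if_pos (by omega)]
  · have hge : ¬ (w * k + c < k) := by
      have : 1 * k ≤ w * k := Nat.mul_le_mul_right k h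
      omega
    rw [if_neg hge]
    have hsub : w * k + c - k = (w - 1) * k + c := by
      have : (w - 1) * k + 1 * k = w * k := by
        rw [← Nat.add_mul]
        congr 1
        omega
      omega
    rw [hsub, div2k' hk hc]
    omega

lemma div_lt_2s' {s k : ℕ} (z : Fin (2 * s * k)) : z.1 / k < 2 * s := by
  have hz := z.2
  have hk : 0 < k := by
    rcases Nat.eq_zero_or_pos k with h | h
    · subst h; simp at hz
    · exact h
  apply Nat.div_lt_of_lt_mul
  calc z.1 < 2 * s * k := hz
    _ = k * (2 * s) := by ring

lemma term_block' {s k : ℕ} {G₁ G₂ : Matrix (Fin (2 * s * k)) (Fin (2 * s * k)) ℂ}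
    (hbd1 : ∀ x y : Fin (2 * s * k), x.1 / (2 * k) ≠ y.1 / (2 * k) → G₁ x y = 0)
    (hbd2 : ∀ x y : Fin (2 * s * k), blkIdx2 k x.1 ≠ blkIdx2 k y.1 → G₂ x y = 0)
    (i j : Fin (2 * s)) (a b : Fin k) (z : Fin (2 * s * k))
    (hne : G₁ ⟨i.1 * k + a.1, blk_lt i a⟩ z * G₂ z ⟨j.1 * k + b.1, blk_lt j b⟩ ≠ 0) :
    (z.1 / k) / 2 = i.1 / 2 ∧ (z.1 / k + 1) / 2 = (j.1 + 1) / 2 := by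
  have hk : 0 < k := by have := a.2; omega
  obtain ⟨h1, h2⟩ := mul_ne_zero_iff.mp hne
  have e1 : (i.1 * k + a.1) / (2 * k) = z.1 / (2 * k) := by
    by_contra hc
    exact h1 (hbd1 _ _ hc)
  have e2 : blkIdx2 k z.1 = blkIdx2 k (j.1 * k + b.1) := by
    by_contra hc
    exact h2 (hbd2 _ _ hc)
  have d1 : (i.1 * k + a.1) / (2 * k) = i.1 / 2 := div2k' hk a.2
  have d2 : z.1 / (2 * k) = z.1 / k / 2 := by
    rw [Nat.div_div_eq_div_mul]
    congr 1
    ring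
  have d3 : blkIdx2 k z.1 = (z.1 / k + 1) / 2 := by
    have h3 := blkIdx2_eq' (w := z.1 / k) hk (Nat.mod_lt z.1 hk)
    rwa [Nat.div_add_mod' z.1 k] at h3
  have d4 : blkIdx2 k (j.1 * k + b.1) = (j.1 + 1) / 2 := blkIdx2_eq' hk b.2
  omega

end CMVAux
section CMVAux2

lemma LowerTriangular_mul {k : ℕ} {A B : Matrix (Fin k) (Fin k) ℂ}
    (hA : LowerTriangular A) (hB : LowerTriangular B) : LowerTriangular (A * B) := by
  intro a b hab
  rw [Matrix.mul_apply]
  apply Finset.sum_eq_zero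
  intro c _
  rcases lt_or_ge a c with h | h
  · rw [hA a c h, zero_mul]
  · rw [hB c b (lt_of_le_of_lt h hab), mul_zero]

lemma UpperTriangular_mul {k : ℕ} {A B : Matrix (Fin k) (Fin k) ℂ}
    (hA : UpperTriangular A) (hB : UpperTriangular B) : UpperTriangular (A * B) := by
  intro a b hab
  rw [Matrix.mul_apply]
  apply Finset.sum_eq_zero
  intro c _
  rcases lt_or_ge b c with h | h
  · rw [hB c b h, mul_zero]
  · rw [hA a c (lt_of_le_of_lt h hab), zero_mul]

lemma subsq_congr {n k r c r' c' : ℕ} (M : Matrix (Fin n) (Fin n) ℂ)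
    (h1 : r = r') (h2 : c = c') (hr : r + k ≤ n) (hc : c + k ≤ n)
    (hr' : r' + k ≤ n) (hc' : c' + k ≤ n) :
    subsq M k r c hr hc = subsq M k r' c' hr' hc' := by
  subst h1; subst h2; rfl

lemma blk_eq_subsq {s k : ℕ} (G : Matrix (Fin (2 * s * k)) (Fin (2 * s * k)) ℂ)
    (i j : Fin (2 * s)) :
    blk G i j = subsq G k (i.1 * k) (j.1 * k) (bnd_one i.2) (bnd_one j.2) := rfl

lemma blk_mul' {s k : ℕ} {G₁ G₂ : Matrix (Fin (2 * s * k)) (Fin (2 * s * k)) ℂ}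
    (hbd1 : ∀ x y : Fin (2 * s * k), x.1 / (2 * k) ≠ y.1 / (2 * k) → G₁ x y = 0)
    (hbd2 : ∀ x y : Fin (2 * s * k), blkIdx2 k x.1 ≠ blkIdx2 k y.1 → G₂ x y = 0)
    (i j m : Fin (2 * s))
    (hm : ∀ w : ℕ, w < 2 * s → w / 2 = i.1 / 2 → (w + 1) / 2 = (j.1 + 1) / 2 → w = m.1) :
    blk (G₁ * G₂) i j = blk G₁ i m * blk G₂ m j := by
  ext a b
  have hk : 0 < k := by have := a.2; omega
  let x : Fin (2 * s * k) := ⟨i.1 * k + a.1, blk_lt i a⟩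
  let y : Fin (2 * s * k) := ⟨j.1 * k + b.1, blk_lt j b⟩
  let e : Fin k ↪ Fin (2 * s * k) :=
    ⟨fun c => ⟨m.1 * k + c.1, blk_lt m c⟩, by
      intro c d hcd
      have h2 : m.1 * k + c.1 = m.1 * k + d.1 := congrArg Fin.val hcd
      apply Fin.ext
      omega⟩
  have hsum : ∑ z : Fin (2 * s * k), G₁ x z * G₂ z y
      = ∑ c : Fin k, G₁ x (e c) * G₂ (e c) y := by
    rw [← Finset.sum_map Finset.univ e (fun z => G₁ x z * G₂ z y)]
    symm
    apply Finset.sum_subset (Finset.subset_univ _)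
    intro z _ hz
    by_contra hne
    obtain ⟨hw1, hw2⟩ := term_block' hbd1 hbd2 i j a b z hne
    have hzk : z.1 / k = m.1 := hm _ (div_lt_2s' z) hw1 hw2
    apply hz
    rw [Finset.mem_map]
    refine ⟨⟨z.1 % k, Nat.mod_lt _ hk⟩, Finset.mem_univ _, ?_⟩
    apply Fin.ext
    show m.1 * k + z.1 % k = z.1
    rw [← hzk]
    exact Nat.div_add_mod' z.1 k
  show (G₁ * G₂) x y = (blk G₁ i m * blk G₂ m j) a b
  rw [Matrix.mul_apply, Matrix.mul_apply, hsum]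
  rfl

lemma blk_zero' {s k : ℕ} {G₁ G₂ : Matrix (Fin (2 * s * k)) (Fin (2 * s * k)) ℂ}
    (hbd1 : ∀ x y : Fin (2 * s * k), x.1 / (2 * k) ≠ y.1 / (2 * k) → G₁ x y = 0)
    (hbd2 : ∀ x y : Fin (2 * s * k), blkIdx2 k x.1 ≠ blkIdx2 k y.1 → G₂ x y = 0)
    (i j : Fin (2 * s))
    (hm : ∀ w : ℕ, w < 2 * s → w / 2 = i.1 / 2 → (w + 1) / 2 = (j.1 + 1) / 2 → False) :
    blk (G₁ * G₂) i j = 0 := by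
  ext a b
  show (G₁ * G₂) ⟨i.1 * k + a.1, blk_lt i a⟩ ⟨j.1 * k + b.1, blk_lt j b⟩ = (0 : Matrix (Fin k) (Fin k) ℂ) a b
  rw [Matrix.mul_apply]
  rw [Matrix.zero_apply]
  apply Finset.sum_eq_zero
  intro z _
  by_contra hne
  obtain ⟨hw1, hw2⟩ := term_block' hbd1 hbd2 i j a b z hne
  exact hm _ (div_lt_2s' z) hw1 hw2

end CMVAux2
/-- **Converse of the CMV factorization lemma.** If `G₁ = diag(G_{1,1}, …, G_{1,s})` and
`G₂ = diag(I_k, G_{2,2}, …, G_{2,s}, G_{2,s+1})` are block diagonal unitary matrices as in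
the CMV factorization lemma, then `G = G₁ G₂` is a unitary matrix that is CMV structured
with block size `k`. -/
theorem cmv_factorization_converse (s k : ℕ)
    (G₁ G₂ : Matrix (Fin (2 * s * k)) (Fin (2 * s * k)) ℂ)
    (h : IsCMVFactor s k G₁ G₂) :
    G₁ * G₂ ∈ Matrix.unitaryGroup (Fin (2 * s * k)) ℂ ∧ IsCMV s k (G₁ * G₂) := by
  obtain ⟨hU1, hU2, hbd1, hblk1, hbd2, hid, hblk2, hlast⟩ := h
  refine ⟨mul_mem hU1 hU2, ?_, ?_, ?_, ?_⟩
  · -- zero blocks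
    intro i j hcond
    apply blk_zero' hbd1 hbd2
    intro w hw e1 e2
    omega
  · -- lower triangular blocks
    intro p hp1 hp2
    have hs2 : 2 ≤ s := by omega
    have hmul : blk (G₁ * G₂) (⟨2 * p - 2, by omega⟩ : Fin (2 * s)) ⟨2 * p, by omega⟩
        = blk G₁ ⟨2 * p - 2, by omega⟩ ⟨2 * p - 1, by omega⟩
          * blk G₂ ⟨2 * p - 1, by omega⟩ ⟨2 * p, by omega⟩ := by
      apply blk_mul' hbd1 hbd2
      intro w hw e1 e2
      have e1' : w / 2 = (2 * p - 2) / 2 := e1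
      have e2' : (w + 1) / 2 = (2 * p + 1) / 2 := e2
      show w = 2 * p - 1
      omega
    obtain ⟨-, -, -, -, hlow1, hdet1⟩ := hblk1 ⟨p - 1, by omega⟩
    obtain ⟨-, -, -, -, hlow2, hdet2⟩ := hblk2 ⟨p - 1, by omega⟩
    have hA : blk G₁ (⟨2 * p - 2, by omega⟩ : Fin (2 * s)) ⟨2 * p - 1, by omega⟩
        = subsq G₁ k (2 * (p - 1) * k) ((2 * (p - 1) + 1) * k)
            (bnd_one (by omega)) (bnd_one (by omega)) := by
      rw [blk_eq_subsq]
      apply subsq_congr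
      · exact congrArg (· * k) (by omega : 2 * p - 2 = 2 * (p - 1))
      · exact congrArg (· * k) (by omega : 2 * p - 1 = 2 * (p - 1) + 1)
    have hB : blk G₂ (⟨2 * p - 1, by omega⟩ : Fin (2 * s)) ⟨2 * p, by omega⟩
        = subsq G₂ k ((2 * (p - 1) + 1) * k) ((2 * (p - 1) + 2) * k)
            (bnd_one (by omega)) (bnd_one (by omega)) := by
      rw [blk_eq_subsq]
      apply subsq_congr
      · exact congrArg (· * k) (by omega : 2 * p - 1 = 2 * (p - 1) + 1)
      · exact congrArg (· * k) (by omega : 2 * p = 2 * (p - 1) + 2)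
    refine ⟨?_, ?_⟩
    · rw [hmul, hA, hB]
      exact LowerTriangular_mul hlow1 hlow2
    · rw [hmul, hA, hB, Matrix.det_mul]
      exact mul_ne_zero hdet1 hdet2
  · -- the (2,1) block
    intro hs
    have hmul : blk (G₁ * G₂) (⟨1, by omega⟩ : Fin (2 * s)) ⟨0, by omega⟩
        = blk G₁ ⟨1, by omega⟩ ⟨0, by omega⟩ * blk G₂ ⟨0, by omega⟩ ⟨0, by omega⟩ := by
      apply blk_mul' hbd1 hbd2
      intro w hw e1 e2
      have e1' : w / 2 = 1 / 2 := e1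
      have e2' : (w + 1) / 2 = (0 + 1) / 2 := e2
      show w = 0
      omega
    have hI : blk G₂ (⟨0, by omega⟩ : Fin (2 * s)) ⟨0, by omega⟩ = 1 := by
      ext a b
      have h1 : 0 * k + a.1 < k := by have := a.2; omega
      have h2 : 0 * k + b.1 < k := by have := b.2; omega
      have key := hid ⟨0 * k + a.1, blk_lt (⟨0, by omega⟩ : Fin (2 * s)) a⟩
        ⟨0 * k + b.1, blk_lt (⟨0, by omega⟩ : Fin (2 * s)) b⟩ h1 h2
      rw [Matrix.one_apply]
      refine Eq.trans (key : blk G₂ (⟨0, by omega⟩ : Fin (2 * s)) ⟨0, by omega⟩ a b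
          = if 0 * k + a.1 = 0 * k + b.1 then (1 : ℂ) else 0) ?_
      by_cases hab : a = b
      · subst hab; simp
      · rw [if_neg hab, if_neg (fun hv => hab (Fin.ext (by
          have hv' : 0 * k + a.1 = 0 * k + b.1 := hv
          omega)))]
    obtain ⟨-, -, hup, hdet, -, -⟩ := hblk1 ⟨0, by omega⟩
    have hA : blk G₁ (⟨1, by omega⟩ : Fin (2 * s)) ⟨0, by omega⟩
        = subsq G₁ k ((2 * 0 + 1) * k) (2 * 0 * k)
            (bnd_one (by omega)) (bnd_one (by omega)) := by
      rw [blk_eq_subsq]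
    refine ⟨?_, ?_⟩
    · rw [hmul, hI, mul_one, hA]
      exact hup
    · rw [hmul, hI, mul_one, hA]
      exact hdet
  · -- the remaining upper triangular blocks
    intro p hp1 hp2
    have hs2 : 2 ≤ s := by omega
    have hmul : blk (G₁ * G₂) (⟨2 * p - 1, by omega⟩ : Fin (2 * s)) ⟨2 * p - 3, by omega⟩
        = blk G₁ ⟨2 * p - 1, by omega⟩ ⟨2 * p - 2, by omega⟩
          * blk G₂ ⟨2 * p - 2, by omega⟩ ⟨2 * p - 3, by omega⟩ := by
      apply blk_mul' hbd1 hbd2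
      intro w hw e1 e2
      have e1' : w / 2 = (2 * p - 1) / 2 := e1
      have e2' : (w + 1) / 2 = (2 * p - 3 + 1) / 2 := e2
      show w = 2 * p - 2
      omega
    obtain ⟨-, -, hup1, hdet1, -, -⟩ := hblk1 ⟨p - 1, by omega⟩
    obtain ⟨-, -, hup2, hdet2, -, -⟩ := hblk2 ⟨p - 2, by omega⟩
    have hA : blk G₁ (⟨2 * p - 1, by omega⟩ : Fin (2 * s)) ⟨2 * p - 2, by omega⟩
        = subsq G₁ k ((2 * (p - 1) + 1) * k) (2 * (p - 1) * k)
            (bnd_one (by omega)) (bnd_one (by omega)) := by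
      rw [blk_eq_subsq]
      apply subsq_congr
      · exact congrArg (· * k) (by omega : 2 * p - 1 = 2 * (p - 1) + 1)
      · exact congrArg (· * k) (by omega : 2 * p - 2 = 2 * (p - 1))
    have hB : blk G₂ (⟨2 * p - 2, by omega⟩ : Fin (2 * s)) ⟨2 * p - 3, by omega⟩
        = subsq G₂ k ((2 * (p - 2) + 2) * k) ((2 * (p - 2) + 1) * k)
            (bnd_one (by omega)) (bnd_one (by omega)) := by
      rw [blk_eq_subsq]
      apply subsq_congr
      · exact congrArg (· * k) (by omega : 2 * p - 2 = 2 * (p - 2) + 2)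
      · exact congrArg (· * k) (by omega : 2 * p - 3 = 2 * (p - 2) + 1)
    refine ⟨?_, ?_⟩
    · rw [hmul, hA, hB]
      exact UpperTriangular_mul hup1 hup2
    · rw [hmul, hA, hB, Matrix.det_mul]
      exact mul_ne_zero hdet1 hdet2
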